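/- (Powers of the triple-chain kernel in terms of the action–context kernel.) For every integer h ≥ 1 and all triples (x,a,y), (y',a',z) ∈ X×A×X: P₂^{h+1}((y',a',z)|(x,a,y)) = Σ_{ã∈A} P₁((a',z)|(ã,y'))·P₁^{h}((ã,y')|(a,y)), where P₂^{h+1} and P₁^{h} denote iterated compositions (matrix powers) of the kernels P₂ and P₁. -/
import Mathlib


open Finset

/-- **Powers of the triple-chain kernel in terms of the action–context kernel.**
`pol x a` is the policy probability `π(a|x)` and `P x a y` the context transition
probability `P(y|x,a)`.  `P1 (a,x) (b,y) = P₁((b,y)|(a,x)) = π(b|x)·P(y|x,b)` and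
`P2 (x,a,x') (y,b,y') = P₂((y,b,y')|(x,a,x')) = 1{y = x'}·π(b|y)·P(y'|y,b)`; powers of
these kernels are matrix powers (rows index the starting state). -/
theorem triple_chain_power_formula
    {X A : Type*} [Fintype X] [Fintype A] [DecidableEq X] [DecidableEq A]
    (pol : X → A → ℝ) (hpol : ∀ x, (∀ a, 0 ≤ pol x a) ∧ ∑ a, pol x a = 1)
    (P : X → A → X → ℝ) (hP : ∀ x a, (∀ y, 0 ≤ P x a y) ∧ ∑ y, P x a y = 1)
    (P1 : Matrix (A × X) (A × X) ℝ)
    (hP1 : ∀ (a : A) (x : X) (b : A) (y : X), P1 (a, x) (b, y) = pol x b * P x b y)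
    (P2 : Matrix (X × A × X) (X × A × X) ℝ)
    (hP2 : ∀ (x : X) (a : A) (x' : X) (y : X) (b : A) (y' : X),
      P2 (x, a, x') (y, b, y') = if y = x' then pol y b * P y b y' else 0)
    (h : ℕ) (hh : 1 ≤ h) :
    ∀ (x : X) (a : A) (y y' : X) (a' : A) (z : X),
      (P2 ^ (h + 1)) (x, a, y) (y', a', z)
        = ∑ a2 : A, P1 (a2, y') (a', z) * (P1 ^ h) (a, y) (a2, y') := by
  induction h, hh using Nat.le_induction with
  | base =>
    intro x a y y' a' z
    rw [pow_succ, pow_one]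
    simp only [Matrix.mul_apply, Fintype.sum_prod_type, hP2, hP1, pow_one,
      ite_mul, mul_ite, mul_zero, zero_mul, Finset.sum_ite_eq, Finset.sum_ite_eq',
      Finset.mem_univ, if_true]
    rw [Finset.sum_comm]
    apply Finset.sum_congr rfl
    intro b _
    simp [Finset.sum_ite_eq', ite_mul, zero_mul]
    ring
  | succ n hn ih =>
    intro x a y y' a' z
    rw [pow_succ, Matrix.mul_apply]
    rw [Fintype.sum_prod_type]
    simp only [Fintype.sum_prod_type]
    calc (∑ u : X, ∑ b : A, ∑ v : X,
        (P2 ^ (n+1)) (x, a, y) (u, b, v) * P2 (u, b, v) (y', a', z))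
        = ∑ u : X, ∑ b : A, (P2 ^ (n+1)) (x, a, y) (u, b, y') * (pol y' a' * P y' a' z) := by
          apply Finset.sum_congr rfl; intro u _
          apply Finset.sum_congr rfl; intro b _
          simp [hP2, mul_ite, mul_zero, Finset.sum_ite_eq']
      _ = ∑ u : X, ∑ b : A, (∑ a2 : A, P1 (a2, u) (b, y') * (P1 ^ n) (a, y) (a2, u))
            * (pol y' a' * P y' a' z) := by
          apply Finset.sum_congr rfl; intro u _
          apply Finset.sum_congr rfl; intro b _
          rw [ih x a y u b y']
      _ = ∑ a2 : A, P1 (a2, y') (a', z) * (P1 ^ (n+1)) (a, y) (a2, y') := by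
          simp only [pow_succ, Matrix.mul_apply, Fintype.sum_prod_type, hP1,
            Finset.sum_mul, Finset.mul_sum]
          rw [Finset.sum_comm]
          apply Finset.sum_congr rfl; intro u _
          rw [Finset.sum_comm]
          apply Finset.sum_congr rfl; intro b _
          apply Finset.sum_congr rfl; intro a2 _
          ring
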